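/- The cyclic algebra A = (F_{p^p}/F_p, σ, 1), the skew group algebra of K = F_{p^p} with the cyclic group C_p acting via the Frobenius automorphism σ, with its natural C_p-grading A = K ⊕ Ky ⊕ ... ⊕ Ky^{p-1} (where ya = σ(a)y and y^p = 1), is graded symmetric over k = F_p. -/

import Mathlib

open Module

/-- A left ideal of a `G`-graded algebra is graded if it is generated by its
homogeneous elements. -/
def IsGradedLeftIdeal {k A G : Type*} [Field k] [Ring A] [Algebra k A]
    (𝒜 : G → Submodule k A) (I : Submodule A A) : Prop :=
  I = Submodule.span A ((I : Set A) ∩ ⋃ g, (𝒜 g : Set A))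

/-- A `G`-graded algebra is graded symmetric if it admits a symmetric linear functional
vanishing on all homogeneous components of degree ≠ e, whose kernel contains no
nonzero graded left ideal. -/
def IsGradedSymmetric {k A G : Type*} [Field k] [Ring A] [Algebra k A] [Group G]
    (𝒜 : G → Submodule k A) : Prop :=
  ∃ lam : A →ₗ[k] k,
    (∀ a b : A, lam (a * b) = lam (b * a)) ∧
    (∀ g : G, g ≠ 1 → ∀ a ∈ 𝒜 g, lam a = 0) ∧
    ∀ I : Submodule A A, IsGradedLeftIdeal 𝒜 I → (∀ x ∈ I, lam x = 0) → I = ⊥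

/-- A `G`-graded division algebra: a `G`-grading of `A` in which every nonzero
homogeneous element is invertible. -/
structure IsGradedDivisionAlgebra {k A G : Type*} [Field k] [Ring A] [Algebra k A]
    [Group G] [DecidableEq G] (𝒜 : G → Submodule k A) : Prop where
  mul_mem : ∀ {g h : G} {a b : A}, a ∈ 𝒜 g → b ∈ 𝒜 h → a * b ∈ 𝒜 (g * h)
  one_mem : (1 : A) ∈ 𝒜 1
  internal : DirectSum.IsInternal 𝒜
  isUnit_of_ne_zero : ∀ g : G, ∀ a ∈ 𝒜 g, a ≠ 0 → IsUnit a

/-- The cyclic algebra (F_{p^p}/F_p, Frobenius, 1), i.e. the skew group algebra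
A = K ⊕ Ky ⊕ ... ⊕ Ky^{p-1} with y a = a^p y and y^p = 1, with its natural grading
by the cyclic group of order p, is graded symmetric. -/
theorem cyclicAlgebra_isGradedSymmetric (p : ℕ) [Fact p.Prime] (K A : Type*) [Field K]
    [Algebra (ZMod p) K] [Ring A] [Algebra (ZMod p) A]
    (hK : Module.finrank (ZMod p) K = p)
    (iota : K →ₐ[ZMod p] A) (hinj : Function.Injective iota) (y : A)
    (hy : ∀ a : K, y * iota a = iota (a ^ p) * y) (hyp : y ^ p = 1)
    (𝒜 : Multiplicative (ZMod p) → Submodule (ZMod p) A)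
    (h𝒜 : ∀ i : ZMod p, (𝒜 (Multiplicative.ofAdd i) : Set A) =
      {z : A | ∃ a : K, z = iota a * y ^ i.val})
    (hinternal : DirectSum.IsInternal 𝒜) :
    IsGradedSymmetric 𝒜 := by
  classical
  have hp : p.Prime := Fact.out
  haveI : NeZero p := ⟨hp.ne_zero⟩
  haveI : FiniteDimensional (ZMod p) K := FiniteDimensional.of_finrank_pos (by rw [hK]; exact hp.pos)
  haveI : Finite K := Module.finite_of_finite (ZMod p)
  haveI : Fintype K := Fintype.ofFinite K
  haveI : Algebra.IsSeparable (ZMod p) K := inferInstance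
  have hcard : Fintype.card K = p ^ p := by
    rw [Module.card_eq_pow_finrank (K := ZMod p), ZMod.card, hK]
  haveI : CharP K p := charP_of_injective_algebraMap (algebraMap (ZMod p) K).injective p
  let σ : K ≃ₐ[ZMod p] K := AlgEquiv.ofRingEquiv (f := frobeniusEquiv K p)
    (fun c => by show (algebraMap (ZMod p) K c) ^ p = _; rw [← map_pow, ZMod.pow_card])
  have htr : ∀ x : K, Algebra.trace (ZMod p) K (x ^ p) = Algebra.trace (ZMod p) K x := by
    intro x
    exact Algebra.trace_eq_of_algEquiv σ x
  have htrn : ∀ (n : ℕ) (x : K),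
      Algebra.trace (ZMod p) K (x ^ p ^ n) = Algebra.trace (ZMod p) K x := by
    intro n
    induction n with
    | zero => simp
    | succ n ih => intro x; rw [pow_succ, pow_mul]; rw [htr (x ^ p ^ n)]; exact ih x
  have hKpow : ∀ x : K, x ^ p ^ p = x := by
    intro x; rw [← hcard]; exact FiniteField.pow_card x
  -- basic structure lemmas
  have hyn : ∀ (n : ℕ) (a : K), y ^ n * iota a = iota (a ^ p ^ n) * y ^ n := by
    intro n
    induction n with
    | zero => intro a; simp
    | succ n ih =>
      intro a
      rw [pow_succ, mul_assoc, hy a, ← mul_assoc, ih (a ^ p), ← pow_mul, ← pow_succ']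
      rw [mul_assoc]
  have hymod : ∀ n : ℕ, y ^ n = y ^ (n % p) := by
    intro n
    conv_lhs => rw [← Nat.div_add_mod n p]
    rw [pow_add, pow_mul, hyp, one_pow, one_mul]
  have hmul : ∀ (m n : ℕ) (u v : K),
      (iota u * y ^ m) * (iota v * y ^ n) = iota (u * v ^ p ^ m) * y ^ (m + n) := by
    intro m n u v
    rw [mul_assoc, ← mul_assoc (y ^ m), hyn m v, map_mul, pow_add]
    simp [mul_assoc]
  have hmem : ∀ (i : ZMod p) (a : K), iota a * y ^ i.val ∈ 𝒜 (Multiplicative.ofAdd i) := by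
    intro i a
    have h : (iota a * y ^ i.val) ∈ (𝒜 (Multiplicative.ofAdd i) : Set A) := by
      rw [h𝒜 i]; exact ⟨a, rfl⟩
    exact h
  have hmem' : ∀ (i : ZMod p) (z : A), z ∈ 𝒜 (Multiplicative.ofAdd i) →
      ∃ a : K, z = iota a * y ^ i.val := by
    intro i z hz
    have h : z ∈ (𝒜 (Multiplicative.ofAdd i) : Set A) := hz
    rwa [h𝒜 i] at h
  -- the range of iota is the identity component
  have hrange : 𝒜 (1 : Multiplicative (ZMod p)) = LinearMap.range iota.toLinearMap := by
    apply SetLike.coe_injective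
    rw [show (1 : Multiplicative (ZMod p)) = Multiplicative.ofAdd (0 : ZMod p) from rfl, h𝒜 0]
    ext z
    simp [ZMod.val_zero]
    constructor
    · rintro ⟨a, rfl⟩; exact ⟨a, rfl⟩
    · rintro ⟨a, rfl⟩; exact ⟨a, rfl⟩
  -- projection onto identity component
  let e := LinearEquiv.ofBijective (DirectSum.coeLinearMap 𝒜) hinternal
  let π : A →ₗ[ZMod p] 𝒜 (1 : Multiplicative (ZMod p)) :=
    (DirectSum.component (ZMod p) (Multiplicative (ZMod p)) (fun g => 𝒜 g)
      (1 : Multiplicative (ZMod p))) ∘ₗ e.symm.toLinearMap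
  have hπ0 : ∀ (g : Multiplicative (ZMod p)), g ≠ 1 → ∀ a ∈ 𝒜 g, π a = 0 := by
    intro g hg a ha
    exact hinternal.ofBijective_coeLinearMap_of_mem_ne hg ha
  have hπ1 : ∀ a (ha : a ∈ 𝒜 (1 : Multiplicative (ZMod p))), π a = ⟨a, ha⟩ := by
    intro a ha
    exact hinternal.ofBijective_coeLinearMap_of_mem ha
  let ψ := LinearEquiv.ofInjective iota.toLinearMap hinj
  let coef : A →ₗ[ZMod p] K :=
    ψ.symm.toLinearMap ∘ₗ (LinearEquiv.ofEq _ _ hrange).toLinearMap ∘ₗ π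
  let lam : A →ₗ[ZMod p] ZMod p := (Algebra.trace (ZMod p) K) ∘ₗ coef
  have hlam_iota : ∀ w : K, lam (iota w) = Algebra.trace (ZMod p) K w := by
    intro w
    have hmem1 : iota w ∈ 𝒜 (1 : Multiplicative (ZMod p)) := by
      rw [hrange]; exact ⟨w, rfl⟩
    have hc : coef (iota w) = w := by
      show ψ.symm ((LinearEquiv.ofEq _ _ hrange) (π (iota w))) = w
      rw [hπ1 _ hmem1]
      rw [LinearEquiv.symm_apply_eq]
      apply Subtype.ext
      rfl
    show Algebra.trace (ZMod p) K (coef (iota w)) = _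
    rw [hc]
  have hlam0 : ∀ (g : Multiplicative (ZMod p)), g ≠ 1 → ∀ a ∈ 𝒜 g, lam a = 0 := by
    intro g hg a ha
    show Algebra.trace (ZMod p) K (ψ.symm ((LinearEquiv.ofEq _ _ hrange) (π a))) = 0
    rw [hπ0 g hg a ha]
    simp
  -- symmetry on homogeneous elements
  have hval : ∀ i j : ZMod p, i + j = 0 → i.val + j.val = 0 ∨ i.val + j.val = p := by
    intro i j hij
    have h1 : (i.val + j.val) % p = 0 := by
      have := ZMod.val_add i j
      rw [hij, ZMod.val_zero] at this
      omega
    have h2 : i.val < p := ZMod.val_lt i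
    have h3 : j.val < p := ZMod.val_lt j
    rcases Nat.eq_zero_or_pos (i.val + j.val) with h | h
    · left; exact h
    · right
      exact Nat.eq_of_dvd_of_lt_two_mul h.ne' (Nat.dvd_of_mod_eq_zero h1) (by omega)
  have hhom : ∀ (i j : ZMod p) (u v : K),
      lam ((iota u * y ^ i.val) * (iota v * y ^ j.val)) =
      lam ((iota v * y ^ j.val) * (iota u * y ^ i.val)) := by
    intro i j u v
    rw [hmul, hmul]
    by_cases hij : i + j = 0
    · have h1 : (i.val + j.val) % p = 0 := by
        have := ZMod.val_add i j
        rw [hij, ZMod.val_zero] at this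
        omega
      have h2 : (j.val + i.val) % p = 0 := by rwa [Nat.add_comm]
      rw [hymod (i.val + j.val), hymod (j.val + i.val), h1, h2, pow_zero, mul_one, mul_one,
        hlam_iota, hlam_iota]
      rcases hval i j hij with h | h
      · have hi0 : i.val = 0 := by omega
        have hj0 : j.val = 0 := by omega
        rw [hi0, hj0]
        ring_nf
      · -- trace identity
        have key : (v * u ^ p ^ j.val) ^ p ^ i.val = u * v ^ p ^ i.val := by
          rw [mul_pow, ← pow_mul, ← pow_add]
          rw [show j.val + i.val = p by omega, hKpow u]
          ring
        rw [← key, htrn]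
    · have hne : (Multiplicative.ofAdd (i + j)) ≠ (1 : Multiplicative (ZMod p)) := by
        intro h; exact hij (Multiplicative.ofAdd.injective (a₂ := 0) h)
      have m1 : iota (u * v ^ p ^ i.val) * y ^ (i.val + j.val) ∈ 𝒜 (Multiplicative.ofAdd (i + j)) := by
        rw [hymod, ← ZMod.val_add]
        exact hmem (i + j) _
      have m2 : iota (v * u ^ p ^ j.val) * y ^ (j.val + i.val) ∈ 𝒜 (Multiplicative.ofAdd (i + j)) := by
        rw [hymod, show (j.val + i.val) % p = (i.val + j.val) % p from by rw [Nat.add_comm], ← ZMod.val_add]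
        exact hmem (i + j) _
      rw [hlam0 _ hne _ m1, hlam0 _ hne _ m2]
  -- symmetry in general
  have hsup : ∀ a : A, a ∈ ⨆ g, 𝒜 g := by
    intro a
    rw [hinternal.submodule_iSup_eq_top]
    trivial
  have hsym1 : ∀ (i : ZMod p) (u : K) (b : A),
      lam ((iota u * y ^ i.val) * b) = lam (b * (iota u * y ^ i.val)) := by
    intro i u b
    refine Submodule.iSup_induction 𝒜 (motive := fun b : A =>
      lam ((iota u * y ^ i.val) * b) = lam (b * (iota u * y ^ i.val))) (hsup b) ?_ ?_ ?_
    · intro g z hz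
      obtain ⟨v, rfl⟩ := hmem' (Multiplicative.toAdd g) z hz
      exact hhom i (Multiplicative.toAdd g) u v
    · simp
    · intro x z hx hz
      rw [mul_add, add_mul, map_add, map_add, hx, hz]
  have hsym : ∀ a b : A, lam (a * b) = lam (b * a) := by
    intro a b
    refine Submodule.iSup_induction 𝒜 (motive := fun a : A =>
      lam (a * b) = lam (b * a)) (hsup a) ?_ ?_ ?_
    · intro g z hz
      obtain ⟨v, rfl⟩ := hmem' (Multiplicative.toAdd g) z hz
      exact hsym1 (Multiplicative.toAdd g) v b
    · simp
    · intro x z hx hz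
      rw [mul_add, add_mul, map_add, map_add, hx, hz]
  refine ⟨lam, hsym, hlam0, ?_⟩
  -- kernel contains no graded left ideal
  intro I hgr h0
  unfold IsGradedLeftIdeal at hgr
  rw [hgr, Submodule.span_eq_bot]
  rintro x ⟨hxI, hxhom⟩
  simp only [Set.mem_iUnion] at hxhom
  obtain ⟨g, hxg⟩ := hxhom
  set i : ZMod p := Multiplicative.toAdd g with hi
  obtain ⟨u, rfl⟩ := hmem' i x hxg
  by_cases hu : u = 0
  · rw [hu]; simp
  exfalso
  set b : K := u ^ p ^ (p - i.val) with hb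
  have hbne : b ≠ 0 := pow_ne_zero _ hu
  have hxmem : ∀ c : K, iota (c * b) ∈ I := by
    intro c
    have hIsm : (iota c * y ^ (p - i.val)) • (iota u * y ^ i.val) ∈ I := I.smul_mem _ hxI
    have heq : (iota c * y ^ (p - i.val)) • (iota u * y ^ i.val) = iota (c * b) := by
      show (iota c * y ^ (p - i.val)) * (iota u * y ^ i.val) = _
      rw [hmul]
      rw [show p - i.val + i.val = p from by have := ZMod.val_lt i; omega, hyp, mul_one, hb]
    rwa [heq] at hIsm
  have hall : ∀ c : K, Algebra.trace (ZMod p) K (b * c) = 0 := by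
    intro c
    have h := h0 _ (hxmem c)
    rw [hlam_iota] at h
    rwa [mul_comm]
  exact hbne ((traceForm_nondegenerate (ZMod p) K).1 b (fun c => by
    simpa [Algebra.traceForm_apply] using hall c))
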